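/- arXiv:2205.05039 — 4 statements merged into one kernel-verified Lean document; each statement's English description precedes it below -/
import Mathlib

section
/- Let Λ be a diagonal matrix with nonnegative real diagonal entries λ_1,…,λ_n, and let S be a Hermitian positive semi-definite matrix with diagonal entries d_1,…,d_n. Then det(I + Λ S) ≤ ∏_{i=1}^n (1 + λ_i d_i). -/
open Matrix ComplexOrder

lemma trace_eq_sum_eigs {n : ℕ} {M : Matrix (Fin n) (Fin n) ℂ} (hM : M.IsHermitian) :
    M.trace = ∑ i, (hM.eigenvalues i : ℂ) := by
  conv_lhs => rw [hM.spectral_theorem]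
  rw [Unitary.conjStarAlgAut_apply, Matrix.trace_mul_cycle]
  rw [show star (hM.eigenvectorUnitary : Matrix (Fin n) (Fin n) ℂ) * (hM.eigenvectorUnitary : Matrix (Fin n) (Fin n) ℂ) = 1 from (Matrix.mem_unitaryGroup_iff').mp hM.eigenvectorUnitary.2]
  simp [Matrix.trace_diagonal]

lemma hadamard_psd {n : ℕ} {M : Matrix (Fin n) (Fin n) ℂ} (hM : M.PosSemidef)
    (hd : ∀ i, 0 < (M i i).re) : (M.det).re ≤ ∏ i, (M i i).re := by
  rcases Nat.eq_zero_or_pos n with hn | hn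
  · subst hn; simp [Matrix.det_isEmpty]
  set d : Fin n → ℝ := fun i => (M i i).re with hdef
  set e : Fin n → ℝ := fun i => (Real.sqrt (d i))⁻¹ with he
  have hepos : ∀ i, 0 < e i := fun i => inv_pos.2 (Real.sqrt_pos.2 (hd i))
  set E : Matrix (Fin n) (Fin n) ℂ := Matrix.diagonal (fun i => (e i : ℂ)) with hE
  have hEH : Eᴴ = E := by
    have h0 : (star fun i => ((e i : ℂ))) = fun i => ((e i : ℂ)) :=
      funext fun i => Complex.conj_ofReal (e i)
    rw [hE, Matrix.diagonal_conjTranspose, h0]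
  set N := E * M * E with hNdef
  have hNpsd : N.PosSemidef := by
    have := hM.conjTranspose_mul_mul_same E
    rwa [hEH] at this
  have hMii : ∀ i, M i i = (d i : ℂ) := by
    intro i
    have h1 : star (M i i) = M i i := congrFun (congrFun hM.isHermitian i) i
    exact (Complex.conj_eq_iff_re.mp h1).symm
  have hNii : ∀ i, N i i = 1 := by
    intro i
    have h1 : e i * d i * e i = 1 := by
      have hs : Real.sqrt (d i) ≠ 0 := ne_of_gt (Real.sqrt_pos.2 (hd i))
      have h2 : Real.sqrt (d i) * Real.sqrt (d i) = d i := Real.mul_self_sqrt (hd i).le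
      field_simp [he]
      have he' : e i = (Real.sqrt (d i))⁻¹ := rfl
      rw [he', inv_pow, sq, h2]
      exact inv_mul_cancel₀ (ne_of_gt (hd i))
    have : N i i = (e i : ℂ) * M i i * (e i : ℂ) := by
      rw [hNdef, hE, Matrix.mul_diagonal, Matrix.diagonal_mul]
    rw [this, hMii i,
      show ((e i : ℂ)) * ((d i : ℂ)) * ((e i : ℂ)) = ((e i * d i * e i : ℝ) : ℂ) from by
        norm_cast, h1, Complex.ofReal_one]
  set μ : Fin n → ℝ := hNpsd.isHermitian.eigenvalues with hμ
  have hμnn : ∀ i, 0 ≤ μ i := fun i => hNpsd.eigenvalues_nonneg i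
  have hsum : ∑ i, μ i = n := by
    have h1 : N.trace = ∑ i, (μ i : ℂ) := trace_eq_sum_eigs hNpsd.isHermitian
    have h2 : N.trace = (n : ℂ) := by
      rw [Matrix.trace]
      simp [Matrix.diag, hNii]
    rw [h2] at h1
    have := h1
    push_cast at this
    exact_mod_cast this.symm
  have hprod : (N.det).re = ∏ i, μ i := by
    rw [hNpsd.isHermitian.det_eq_prod_eigenvalues]
    norm_cast
  -- AM-GM
  have hamgm : (∏ i, μ i) ≤ 1 := by
    have h := Real.geom_mean_le_arith_mean Finset.univ (fun _ => 1) μ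
      (fun _ _ => zero_le_one) (by simp [hn]) (fun i _ => hμnn i)
    simp only [Real.rpow_one, one_mul, Finset.sum_const, Finset.card_univ,
      Fintype.card_fin, nsmul_eq_mul, mul_one] at h
    rw [hsum] at h
    rw [div_self (by positivity : (n:ℝ) ≠ 0)] at h
    have hpn : (0:ℝ) ≤ ∏ i, μ i := Finset.prod_nonneg (fun i _ => hμnn i)
    have h3 : ((∏ i, μ i) ^ ((n:ℝ)⁻¹)) ^ (n:ℝ) ≤ 1 ^ (n:ℝ) :=
      Real.rpow_le_rpow (Real.rpow_nonneg hpn _) h (by positivity)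
    rwa [← Real.rpow_mul hpn,
      inv_mul_cancel₀ (by positivity : (n:ℝ) ≠ 0), Real.rpow_one, Real.one_rpow] at h3
  -- relate det N and det M
  set P : ℝ := ∏ i, e i with hP
  have hPpos : 0 < P := Finset.prod_pos (fun i _ => hepos i)
  have hdetE : E.det = (P : ℂ) := by
    rw [hE, Matrix.det_diagonal, hP]
    norm_cast
  have hdetN : N.det = (P : ℂ) * M.det * (P : ℂ) := by
    rw [hNdef, Matrix.det_mul, Matrix.det_mul, hdetE]
  have hre : (N.det).re = P * P * (M.det).re := by
    rw [hdetN]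
    have : (P : ℂ) * M.det * (P : ℂ) = ((P * P : ℝ) : ℂ) * M.det := by push_cast; ring
    rw [this, Complex.re_ofReal_mul]
  have hPP : P * P = (∏ i, d i)⁻¹ := by
    rw [hP, ← Finset.prod_mul_distrib, ← Finset.prod_inv_distrib]
    refine Finset.prod_congr rfl (fun i _ => ?_)
    rw [he]
    rw [← mul_inv, Real.mul_self_sqrt (hd i).le]
  have key : P * P * (M.det).re ≤ 1 := by rw [← hre, hprod]; exact hamgm
  have hdpos : 0 < ∏ i, d i := Finset.prod_pos (fun i _ => hd i)
  calc (M.det).re = (P * P)⁻¹ * (P * P * (M.det).re) := by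
        rw [← mul_assoc, inv_mul_cancel₀ (by positivity : P * P ≠ 0), one_mul]
    _ ≤ (P * P)⁻¹ * 1 := by
        exact mul_le_mul_of_nonneg_left key (by positivity)
    _ = ∏ i, d i := by rw [hPP, inv_inv, mul_one]

/-- Hadamard-type bound: det(I + Λ S) ≤ ∏ (1 + λ_i d_i) for Λ diagonal nonnegative and
S Hermitian PSD with diagonal d_i. -/
theorem det_one_add_diagonal_mul_le_prod {n : ℕ} (l : Fin n → ℝ) (S : Matrix (Fin n) (Fin n) ℂ)
    (hl : ∀ i, 0 ≤ l i) (hS : S.PosSemidef) :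
    ((1 + Matrix.diagonal (fun i => (l i : ℂ)) * S).det).re ≤
      ∏ i, (1 + l i * (S i i).re) := by
  have hdiag : ∀ i, 0 ≤ (S i i).re := by
    intro i
    have h := hS.dotProduct_mulVec_nonneg (Pi.single i 1)
    have h2 : star (Pi.single i 1 : Fin n → ℂ) ⬝ᵥ S *ᵥ Pi.single i 1 = S i i := by
      simp [dotProduct, mulVec, Pi.single_apply]
    rw [h2] at h
    exact (Complex.le_def.mp h).1
  set r : Fin n → ℝ := fun i => Real.sqrt (l i) with hr
  set R : Matrix (Fin n) (Fin n) ℂ := Matrix.diagonal (fun i => (r i : ℂ)) with hR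
  have hrr : ∀ i, r i * r i = l i := fun i => Real.mul_self_sqrt (hl i)
  have hRR : R * R = Matrix.diagonal (fun i => (l i : ℂ)) := by
    have h0 : (fun i => ((r i : ℂ)) * ((r i : ℂ))) = fun i => ((l i : ℂ)) :=
      funext fun i => by rw [← Complex.ofReal_mul, hrr i]
    rw [hR, Matrix.diagonal_mul_diagonal, h0]
  have hRH : Rᴴ = R := by
    have h0 : (star fun i => ((r i : ℂ))) = fun i => ((r i : ℂ)) :=
      funext fun i => Complex.conj_ofReal (r i)
    rw [hR, Matrix.diagonal_conjTranspose, h0]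
  have hpsd : (1 + R * S * R).PosSemidef := by
    have h1 : (Rᴴ * S * R).PosSemidef := hS.conjTranspose_mul_mul_same R
    rw [hRH] at h1
    exact Matrix.PosSemidef.add Matrix.PosSemidef.one h1
  have hdiagM : ∀ i, ((1 + R * S * R) i i).re = 1 + l i * (S i i).re := by
    intro i
    have h1 : (1 + R * S * R) i i = 1 + (r i : ℂ) * S i i * (r i : ℂ) := by
      rw [Matrix.add_apply, Matrix.one_apply_eq, hR, Matrix.mul_diagonal, Matrix.diagonal_mul]
    rw [h1]
    have h2 : (r i : ℂ) * S i i * (r i : ℂ) = ((l i : ℝ) : ℂ) * S i i := by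
      rw [← hrr i]; push_cast; ring
    rw [h2]
    simp [Complex.add_re, Complex.re_ofReal_mul]
  have hdet : (1 + Matrix.diagonal (fun i => (l i : ℂ)) * S).det = (1 + R * S * R).det := by
    rw [← hRR, Matrix.mul_assoc, Matrix.det_one_add_mul_comm]
  rw [hdet]
  have hpos : ∀ i, 0 < ((1 + R * S * R) i i).re := by
    intro i; rw [hdiagM i]
    have := mul_nonneg (hl i) (hdiag i); linarith
  calc ((1 + R * S * R).det).re ≤ ∏ i, ((1 + R * S * R) i i).re := hadamard_psd hpsd hpos
    _ = ∏ i, (1 + l i * (S i i).re) := Finset.prod_congr rfl (fun i _ => hdiagM i)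
end

section
/- For any Hermitian positive semi-definite matrices W (with positive eigenvalues λ_{w,i}) and R with tr R ≤ P, one has log det(I + W R) ≤ ∑_i log(1 + λ_{w,i} max(μ − 1/λ_{w,i}, 0)), where μ is the water level for (λ_{w,i}, P); equality holds when R = (μ I − W^{-1})_+ computed in the eigenbasis of W. -/
open Matrix ComplexOrder

section Helpers
set_option linter.unusedSectionVars false
set_option linter.unusedSectionVars false
open Matrix ComplexOrder Polynomial

variable {m : Type*} [Fintype m] [DecidableEq m]

lemma charpoly_diag' (d : m → ℂ) :
    (Matrix.diagonal d).charpoly = ∏ i, (X - C (d i)) := by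
  have h : charmatrix (Matrix.diagonal d) = Matrix.diagonal (fun i => X - C (d i)) := by
    ext i j
    by_cases h : i = j
    · subst h; simp [charmatrix_apply_eq]
    · simp [charmatrix_apply_ne _ _ _ h, Matrix.diagonal_apply_ne _ h]
  rw [Matrix.charpoly, h, Matrix.det_diagonal]

lemma charmatrix_eq (M : Matrix m m ℂ) :
    charmatrix M = Matrix.diagonal (fun _ => (X : ℂ[X])) - M.map (C : ℂ →+* ℂ[X]) := by
  ext i j
  rw [charmatrix_apply]
  simp [Matrix.sub_apply]

lemma charpoly_conj (U : Matrix.unitaryGroup m ℂ) (D : Matrix m m ℂ) :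
    ((U : Matrix m m ℂ) * D * (U : Matrix m m ℂ)ᴴ).charpoly = D.charpoly := by
  have hU : (U : Matrix m m ℂ) * (U : Matrix m m ℂ)ᴴ = 1 := by
    simpa [Matrix.star_eq_conjTranspose] using (Matrix.mem_unitaryGroup_iff.mp U.2)
  set Vc : Matrix m m ℂ[X] := (U : Matrix m m ℂ).map (C : ℂ →+* ℂ[X]) with hVc
  set Wc : Matrix m m ℂ[X] := ((U : Matrix m m ℂ)ᴴ).map (C : ℂ →+* ℂ[X]) with hWc
  have hVW : Vc * Wc = 1 := by
    rw [hVc, hWc, ← Matrix.map_mul, hU]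
    ext i j; by_cases h : i = j <;> simp [h, Matrix.one_apply]
  have hdiagX : ∀ (A : Matrix m m ℂ[X]), A * Matrix.diagonal (fun _ => (X : ℂ[X])) =
      Matrix.diagonal (fun _ => (X : ℂ[X])) * A := by
    intro A; ext i j; simp [Matrix.mul_diagonal, Matrix.diagonal_mul, mul_comm]
  have key : charmatrix ((U : Matrix m m ℂ) * D * (U : Matrix m m ℂ)ᴴ)
      = Vc * charmatrix D * Wc := by
    rw [charmatrix_eq, charmatrix_eq, Matrix.map_mul, Matrix.map_mul, Matrix.mul_sub,
      Matrix.sub_mul]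
    congr 1
    rw [hdiagX, mul_assoc, hVW, mul_one]
  rw [Matrix.charpoly, key, Matrix.det_mul, Matrix.det_mul, mul_comm, ← mul_assoc,
    ← Matrix.det_mul, Matrix.det_mul_comm, hVW, Matrix.det_one, one_mul, Matrix.charpoly]

lemma diag_multiset_eq (U V : Matrix.unitaryGroup m ℂ) (d e : m → ℂ)
    (h : (U : Matrix m m ℂ) * Matrix.diagonal d * (U : Matrix m m ℂ)ᴴ
       = (V : Matrix m m ℂ) * Matrix.diagonal e * (V : Matrix m m ℂ)ᴴ) :
    Finset.univ.val.map d = Finset.univ.val.map e := by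
  have h1 : (Matrix.diagonal d).charpoly = (Matrix.diagonal e).charpoly := by
    have := congrArg Matrix.charpoly h
    rwa [charpoly_conj, charpoly_conj] at this
  rw [charpoly_diag', charpoly_diag'] at h1
  have h2 : ∀ f : m → ℂ, ∏ i, (X - C (f i)) =
      ((Finset.univ.val.map f).map (fun a => X - C a)).prod := by
    intro f
    rw [Multiset.map_map]
    rfl
  rw [h2 d, h2 e] at h1
  have := congrArg Polynomial.roots h1
  rwa [roots_multiset_prod_X_sub_C, roots_multiset_prod_X_sub_C] at this

variable {m : Type*} [Fintype m] [DecidableEq m]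

lemma quad_single (M : Matrix m m ℂ) (i : m) :
    dotProduct (star (Pi.single i 1 : m → ℂ)) (M *ᵥ (Pi.single i 1)) = M i i := by
  simp [Matrix.mulVec_single, dotProduct, Pi.single_apply, apply_ite]

lemma psd_diag_nonneg {M : Matrix m m ℂ} (hM : M.PosSemidef) (i : m) :
    0 ≤ (M i i).re ∧ (M i i).im = 0 := by
  have := hM.dotProduct_mulVec_nonneg (Pi.single i 1)
  rw [quad_single] at this
  rw [Complex.le_def] at this
  simp at this
  exact ⟨this.1, this.2.symm⟩

lemma pd_diag_pos {M : Matrix m m ℂ} (hM : M.PosDef) (i : m) :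
    0 < (M i i).re ∧ (M i i).im = 0 := by
  have hx : (Pi.single i 1 : m → ℂ) ≠ 0 := by
    intro h
    have := congrFun h i
    simp at this
  have := hM.dotProduct_mulVec_pos hx
  rw [quad_single] at this
  rw [Complex.lt_def] at this
  simp at this
  exact ⟨this.1, this.2.symm⟩

lemma trace_eq_sum_eig {M : Matrix m m ℂ} (hM : M.IsHermitian) :
    M.trace = ∑ i, (hM.eigenvalues i : ℂ) := by
  conv_lhs => rw [hM.spectral_theorem, Unitary.conjStarAlgAut_apply]
  rw [Matrix.trace_mul_comm, ← mul_assoc]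
  have : (star (hM.eigenvectorUnitary : Matrix m m ℂ)) * (hM.eigenvectorUnitary : Matrix m m ℂ)
      = 1 := Unitary.coe_star_mul_self hM.eigenvectorUnitary
  rw [this, one_mul, Matrix.trace_diagonal]
  rfl

lemma amgm_card (γ : m → ℝ) (h0 : ∀ i, 0 ≤ γ i) (hs : ∑ i, γ i = Fintype.card m) :
    ∏ i, γ i ≤ 1 := by
  rcases Nat.eq_zero_or_pos (Fintype.card m) with hc | hc
  · have : IsEmpty m := Fintype.card_eq_zero_iff.mp hc
    simp
  · set N : ℝ := (Fintype.card m : ℝ) with hN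
    have hNpos : 0 < N := by positivity
    have amgm := Real.geom_mean_le_arith_mean_weighted Finset.univ (fun _ => N⁻¹) γ
      (fun i _ => by positivity) (by simp [Finset.card_univ]; field_simp; exact hN.symm) (fun i _ => h0 i)
    have h1 : ∑ i, N⁻¹ * γ i = 1 := by
      rw [← Finset.mul_sum, hs]
      field_simp
    rw [h1] at amgm
    have h2 : (∏ i, γ i ^ (N⁻¹ : ℝ)) ^ (N : ℝ) ≤ 1 := by
      apply Real.rpow_le_one _ amgm hNpos.le
      exact Finset.prod_nonneg fun i _ => Real.rpow_nonneg (h0 i) _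
    rwa [Real.finset_prod_rpow _ _ (fun i _ => h0 i) _,
      ← Real.rpow_mul (Finset.prod_nonneg fun i _ => h0 i), inv_mul_cancel₀ hNpos.ne',
      Real.rpow_one] at h2

lemma posdef_conj {M B : Matrix m m ℂ} (hM : M.PosDef) (hB : IsUnit B) :
    (Bᴴ * M * B).PosDef := by
  exact hM.conjTranspose_mul_mul_same (Matrix.mulVec_injective_iff_isUnit.mpr hB)

lemma hadamard_pd {M : Matrix m m ℂ} (hM : M.PosDef) :
    M.det.re ≤ ∏ i, (M i i).re := by
  set d : m → ℝ := fun i => (M i i).re with hd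
  have hdpos : ∀ i, 0 < d i := fun i => (pd_diag_pos hM i).1
  have hdiagval : ∀ i, M i i = (d i : ℂ) := fun i =>
    Complex.ext rfl (by simpa using (pd_diag_pos hM i).2)
  set e : m → ℝ := fun i => (Real.sqrt (d i))⁻¹ with he
  have hepos : ∀ i, 0 < e i := fun i => by
    have := hdpos i
    positivity
  set E : Matrix m m ℂ := Matrix.diagonal (fun i => (e i : ℂ)) with hE
  have hEH : Eᴴ = E := by
    have hst : (star fun i => ((e i : ℝ) : ℂ)) = fun i => ((e i : ℝ) : ℂ) := by
      funext i
      exact Complex.conj_ofReal (e i)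
    rw [hE, Matrix.diagonal_conjTranspose, hst]
  have hEunit : IsUnit E := by
    rw [hE, Matrix.isUnit_iff_isUnit_det, Matrix.det_diagonal]
    refine isUnit_iff_ne_zero.mpr (Finset.prod_ne_zero_iff.mpr fun i _ => ?_)
    exact_mod_cast (hepos i).ne'
  set N : Matrix m m ℂ := E * M * E with hN
  have hNpd : N.PosDef := by
    have := posdef_conj hM hEunit
    rwa [hEH] at this
  -- diagonal entries of N are 1
  have hNdiag : ∀ i, N i i = 1 := by
    intro i
    rw [hN, hE, Matrix.mul_diagonal, Matrix.diagonal_mul, hdiagval i]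
    rw [← Complex.ofReal_mul, ← Complex.ofReal_mul, ← Complex.ofReal_one]
    congr 1
    have hs : Real.sqrt (d i) ≠ 0 := by
      have := hdpos i; positivity
    rw [he]
    field_simp
    rw [Real.sq_sqrt (hdpos i).le]
  set γ : m → ℝ := hNpd.1.eigenvalues with hγ
  have hγpos : ∀ i, 0 < γ i := hNpd.eigenvalues_pos
  have htr : ∑ i, γ i = Fintype.card m := by
    have h1 : N.trace = ∑ i, (γ i : ℂ) := trace_eq_sum_eig hNpd.1
    have h2 : N.trace = (Fintype.card m : ℂ) := by
      rw [Matrix.trace]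
      simp only [Matrix.diag]
      rw [Finset.sum_congr rfl (fun i _ => hNdiag i)]
      simp
    rw [h2] at h1
    have : ((Fintype.card m : ℝ) : ℂ) = ((∑ i, γ i : ℝ) : ℂ) := by
      push_cast
      exact h1
    exact_mod_cast this.symm
  have hγle : ∏ i, γ i ≤ 1 := amgm_card γ (fun i => (hγpos i).le) htr
  have hdetN : N.det = ((∏ i, γ i : ℝ) : ℂ) := by
    rw [hNpd.1.det_eq_prod_eigenvalues]
    push_cast
    rfl
  have hdetE : E.det = ((∏ i, e i : ℝ) : ℂ) := by
    rw [hE, Matrix.det_diagonal]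
    push_cast
    rfl
  have hee : (∏ i, e i) * (∏ i, e i) = (∏ i, d i)⁻¹ := by
    rw [← Finset.prod_mul_distrib, ← Finset.prod_inv_distrib]
    refine Finset.prod_congr rfl fun i _ => ?_
    rw [he]
    rw [← mul_inv]
    rw [Real.mul_self_sqrt (hdpos i).le]
  have hdprod_pos : 0 < ∏ i, d i := Finset.prod_pos fun i _ => hdpos i
  have h3 : N.det = E.det * M.det * E.det := by rw [hN, Matrix.det_mul, Matrix.det_mul]
  have hdetM : M.det = (((∏ i, d i) * ∏ i, γ i : ℝ) : ℂ) := by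
    have h4 : N.det = (((∏ i, d i)⁻¹ : ℝ) : ℂ) * M.det := by
      rw [h3, hdetE, mul_comm _ M.det, mul_assoc, ← Complex.ofReal_mul, hee, mul_comm]
    have h5 : ((∏ i, d i : ℝ) : ℂ) * N.det = M.det := by
      rw [h4, ← mul_assoc, ← Complex.ofReal_mul, mul_inv_cancel₀ hdprod_pos.ne']
      simp
    rw [← h5, hdetN, ← Complex.ofReal_mul]
  rw [hdetM, Complex.ofReal_re]
  calc (∏ i, d i) * ∏ i, γ i ≤ (∏ i, d i) * 1 := by
        exact mul_le_mul_of_nonneg_left hγle hdprod_pos.le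
    _ = ∏ i, (M i i).re := by rw [mul_one, hd]


lemma sum_wf {m : Type*} [Fintype m] (lam p : m → ℝ) (μ P : ℝ)
    (hlam : ∀ i, 0 < lam i) (hp : ∀ i, 0 ≤ p i) (hμ : 0 < μ)
    (hP : ∑ i, max (μ - 1/lam i) 0 = P) (hsum : ∑ i, p i ≤ P) :
    ∑ i, Real.log (1 + lam i * p i) ≤ ∑ i, Real.log (1 + lam i * max (μ - 1/lam i) 0) := by
  set q : m → ℝ := fun i => max (μ - 1/lam i) 0 with hq
  have hq0 : ∀ i, 0 ≤ q i := fun i => le_max_right _ _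
  have h1q : ∀ i, 0 < 1 + lam i * q i := fun i => by
    have := mul_nonneg (hlam i).le (hq0 i); linarith
  have h1p : ∀ i, 0 < 1 + lam i * p i := fun i => by
    have := mul_nonneg (hlam i).le (hp i); linarith
  set c : m → ℝ := fun i => lam i / (1 + lam i * q i) with hc
  have hceq : ∀ i, 0 < q i → c i = μ⁻¹ := by
    intro i hqi
    have hql : q i = μ - 1/lam i := by
      rcases max_cases (μ - 1/lam i) (0:ℝ) with ⟨h1, h2⟩ | ⟨h1, h2⟩
      · exact h1
      · exact absurd (show q i = 0 from h1) (by linarith)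
    have hden : 1 + lam i * q i = lam i * μ := by
      rw [hql, mul_sub, mul_one_div, div_self (hlam i).ne']
      ring
    show lam i / (1 + lam i * q i) = μ⁻¹
    rw [hden, div_mul_cancel_left₀ (hlam i).ne']
  have hcle : ∀ i, c i ≤ μ⁻¹ := by
    intro i
    rcases lt_or_ge 0 (q i) with h | h
    · rw [hceq i h]
    · have hqi : q i = 0 := le_antisymm h (hq0 i)
      show lam i / (1 + lam i * q i) ≤ μ⁻¹
      rw [hqi, mul_zero, add_zero, div_one]
      have h2 : μ - 1/lam i ≤ q i := le_max_left _ _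
      have h3 : μ ≤ 1 / lam i := by rw [hqi] at h2; linarith
      have h4 : μ * lam i ≤ 1 := (le_div_iff₀ (hlam i)).mp h3
      rw [← one_div, le_div_iff₀ hμ]
      linarith [mul_comm μ (lam i)]
  have step1 : ∀ i, Real.log (1 + lam i * p i) ≤
      Real.log (1 + lam i * q i) + c i * (p i - q i) := by
    intro i
    have hx : 0 < (1 + lam i * p i) / (1 + lam i * q i) := div_pos (h1p i) (h1q i)
    have hlog := Real.log_le_sub_one_of_pos hx
    rw [Real.log_div (h1p i).ne' (h1q i).ne'] at hlog
    have harith : (1 + lam i * p i) / (1 + lam i * q i) - 1 = c i * (p i - q i) := by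
      show _ = lam i / (1 + lam i * q i) * (p i - q i)
      rw [div_sub_one (h1q i).ne', div_mul_eq_mul_div]
      congr 1
      ring
    rw [harith] at hlog
    linarith
  calc ∑ i, Real.log (1 + lam i * p i)
      ≤ ∑ i, (Real.log (1 + lam i * q i) + c i * (p i - q i)) :=
        Finset.sum_le_sum fun i _ => step1 i
    _ = ∑ i, Real.log (1 + lam i * q i) + (∑ i, c i * p i - ∑ i, c i * q i) := by
        rw [Finset.sum_add_distrib]
        congr 1
        rw [← Finset.sum_sub_distrib]
        exact Finset.sum_congr rfl fun i _ => by ring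
    _ ≤ ∑ i, Real.log (1 + lam i * q i) := by
        have hA : ∑ i, c i * p i ≤ μ⁻¹ * ∑ i, p i := by
          rw [Finset.mul_sum]
          exact Finset.sum_le_sum fun i _ => mul_le_mul_of_nonneg_right (hcle i) (hp i)
        have hB : ∑ i, c i * q i = μ⁻¹ * ∑ i, q i := by
          rw [Finset.mul_sum]
          refine Finset.sum_congr rfl fun i _ => ?_
          rcases lt_or_ge 0 (q i) with h | h
          · rw [hceq i h]
          · rw [le_antisymm h (hq0 i), mul_zero, mul_zero]
        have hQ : ∑ i, q i = P := hP
        have : ∑ i, c i * p i - ∑ i, c i * q i ≤ 0 := by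
          rw [hB, hQ]
          have := mul_le_mul_of_nonneg_left hsum (le_of_lt (inv_pos.mpr hμ))
          linarith
        linarith

lemma det_conj_unitary {m : Type*} [Fintype m] [DecidableEq m]
    (U : Matrix.unitaryGroup m ℂ) (X : Matrix m m ℂ) :
    ((U : Matrix m m ℂ) * X * (U : Matrix m m ℂ)ᴴ).det = X.det := by
  have hU : (U : Matrix m m ℂ)ᴴ * (U : Matrix m m ℂ) = 1 := by
    simpa [Matrix.star_eq_conjTranspose] using (Unitary.coe_star_mul_self U)
  rw [Matrix.det_mul, Matrix.det_mul, mul_comm, ← mul_assoc, ← Matrix.det_mul, hU,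
    Matrix.det_one, one_mul]

end Helpers

/-- The positive part of a Hermitian matrix: keep only the positive eigenvalues in an
orthonormal eigenbasis. -/
noncomputable def matPosPart {n : ℕ} (A : Matrix (Fin n) (Fin n) ℂ) (hA : A.IsHermitian) :
    Matrix (Fin n) (Fin n) ℂ :=
  (hA.eigenvectorUnitary : Matrix (Fin n) (Fin n) ℂ) *
    Matrix.diagonal (fun i => ((max (hA.eigenvalues i) 0 : ℝ) : ℂ)) *
    (hA.eigenvectorUnitary : Matrix (Fin n) (Fin n) ℂ)ᴴ

/-- For W Hermitian positive definite with eigenvalues λ_i and any PSD R with tr R ≤ P,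
log det(I + W R) ≤ ∑ log(1 + λ_i max(μ − 1/λ_i, 0)), with equality at
R = (μI − W⁻¹)₊ computed in the eigenbasis of W. -/
theorem logdet_le_waterfilling {n : ℕ} (W : Matrix (Fin n) (Fin n) ℂ) (P μ : ℝ)
    (hW : W.PosDef) (hP : 0 < P) (hμ : 0 < μ)
    (hwater : ∑ i, max (μ - 1 / hW.1.eigenvalues i) 0 = P)
    (hA : ((μ : ℂ) • (1 : Matrix (Fin n) (Fin n) ℂ) - W⁻¹).IsHermitian) :
    (∀ R : Matrix (Fin n) (Fin n) ℂ, R.PosSemidef → R.trace.re ≤ P →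
      Real.log ((1 + W * R).det.re) ≤
        ∑ i, Real.log (1 + hW.1.eigenvalues i * max (μ - 1 / hW.1.eigenvalues i) 0)) ∧
    Real.log ((1 + W * matPosPart _ hA).det.re) =
      ∑ i, Real.log (1 + hW.1.eigenvalues i * max (μ - 1 / hW.1.eigenvalues i) 0) := by
  classical
  set lam : Fin n → ℝ := hW.1.eigenvalues with hlamdef
  have hlam : ∀ i, 0 < lam i := hW.eigenvalues_pos
  set U : Matrix.unitaryGroup (Fin n) ℂ := hW.1.eigenvectorUnitary with hUdef
  have hUU : (U : Matrix (Fin n) (Fin n) ℂ)ᴴ * (U : Matrix (Fin n) (Fin n) ℂ) = 1 := by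
    simpa [Matrix.star_eq_conjTranspose] using Unitary.coe_star_mul_self U
  have hUU' : (U : Matrix (Fin n) (Fin n) ℂ) * (U : Matrix (Fin n) (Fin n) ℂ)ᴴ = 1 := by
    simpa [Matrix.star_eq_conjTranspose] using Unitary.coe_mul_star_self U
  have hcU : ∀ X : Matrix (Fin n) (Fin n) ℂ,
      (U : Matrix (Fin n) (Fin n) ℂ)ᴴ * ((U : Matrix (Fin n) (Fin n) ℂ) * X) = X := by
    intro X; rw [← Matrix.mul_assoc, hUU, Matrix.one_mul]
  set D : Matrix (Fin n) (Fin n) ℂ := Matrix.diagonal (fun i => ((lam i : ℝ) : ℂ)) with hDdef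
  have hWspec : W = (U : Matrix (Fin n) (Fin n) ℂ) * D * (U : Matrix (Fin n) (Fin n) ℂ)ᴴ := by
    have h := hW.1.spectral_theorem
    rw [Unitary.conjStarAlgAut_apply, Matrix.star_eq_conjTranspose] at h
    exact h
  constructor
  · intro R hR hRtr
    set S : Matrix (Fin n) (Fin n) ℂ :=
      (U : Matrix (Fin n) (Fin n) ℂ)ᴴ * R * (U : Matrix (Fin n) (Fin n) ℂ) with hSdef
    have hS : S.PosSemidef := hR.conjTranspose_mul_mul_same _
    set pf : Fin n → ℝ := fun i => (S i i).re with hpf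
    have hp : ∀ i, 0 ≤ pf i := fun i => (psd_diag_nonneg hS i).1
    have hSdiag : ∀ i, S i i = ((pf i : ℝ) : ℂ) := fun i =>
      Complex.ext rfl (by simpa using (psd_diag_nonneg hS i).2)
    have htrS : ∑ i, pf i = R.trace.re := by
      have h1 : S.trace = R.trace := by
        rw [hSdef, Matrix.trace_mul_comm, ← Matrix.mul_assoc, hUU', Matrix.one_mul]
      have h2 : S.trace = ∑ i, S i i := rfl
      rw [← h1, h2, Complex.re_sum]
    set Dh : Matrix (Fin n) (Fin n) ℂ :=
      Matrix.diagonal (fun i => ((Real.sqrt (lam i) : ℝ) : ℂ)) with hDh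
    have hDhH : Dhᴴ = Dh := by
      have hst : (star fun i => ((Real.sqrt (lam i) : ℝ) : ℂ))
          = fun i => ((Real.sqrt (lam i) : ℝ) : ℂ) := by
        funext i; exact Complex.conj_ofReal _
      rw [hDh, Matrix.diagonal_conjTranspose, hst]
    have hDhD : Dh * Dh = D := by
      rw [hDh, hDdef, Matrix.diagonal_mul_diagonal]
      have hfe : (fun i => ((Real.sqrt (lam i) : ℝ) : ℂ) * ((Real.sqrt (lam i) : ℝ) : ℂ))
          = fun i => ((lam i : ℝ) : ℂ) := by
        funext i
        rw [← Complex.ofReal_mul, Real.mul_self_sqrt (hlam i).le]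
      rw [hfe]
    set M : Matrix (Fin n) (Fin n) ℂ := 1 + Dh * S * Dh with hM
    have hMpsd : (Dh * S * Dh).PosSemidef := by
      have := hS.mul_mul_conjTranspose_same Dh
      rwa [hDhH] at this
    have hMpd : M.PosDef := Matrix.PosDef.one.add_posSemidef hMpsd
    have hRS : (U : Matrix (Fin n) (Fin n) ℂ) * S * (U : Matrix (Fin n) (Fin n) ℂ)ᴴ = R := by
      rw [hSdef]
      simp only [← Matrix.mul_assoc]
      rw [hUU', Matrix.one_mul, Matrix.mul_assoc, hUU', Matrix.mul_one]
    have hdetEq : (1 + W * R).det = M.det := by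
      have h1 : 1 + W * R = (U : Matrix (Fin n) (Fin n) ℂ) * (1 + D * S) *
          (U : Matrix (Fin n) (Fin n) ℂ)ᴴ := by
        rw [Matrix.mul_add, Matrix.add_mul, Matrix.mul_one, hUU']
        congr 1
        rw [hWspec, ← hRS]
        simp only [Matrix.mul_assoc]
        rw [hcU]
      rw [h1, det_conj_unitary U]
      have h2 : (1 : Matrix (Fin n) (Fin n) ℂ) + D * S = 1 + Dh * (Dh * S) := by
        rw [← Matrix.mul_assoc Dh Dh S, hDhD]
      rw [h2, Matrix.det_one_add_mul_comm Dh (Dh * S), hM, Matrix.mul_assoc]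
    have hMdiag : ∀ i, (M i i).re = 1 + lam i * pf i := by
      intro i
      rw [hM]
      rw [Matrix.add_apply, Matrix.one_apply_eq, hDh]
      rw [Matrix.mul_diagonal, Matrix.diagonal_mul, hSdiag i]
      rw [← Complex.ofReal_mul, ← Complex.ofReal_mul, ← Complex.ofReal_one,
        ← Complex.ofReal_add, Complex.ofReal_re]
      congr 1
      rw [mul_comm, ← mul_assoc, Real.mul_self_sqrt (hlam i).le]
    have hdetpos : 0 < M.det.re := by
      have := hMpd.det_pos
      rw [Complex.lt_def] at this
      simpa using this.1
    have hprodpos : ∀ i, 0 < 1 + lam i * pf i := fun i => by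
      have := mul_nonneg (hlam i).le (hp i); linarith
    rw [hdetEq]
    calc Real.log M.det.re ≤ Real.log (∏ i, (M i i).re) :=
          Real.log_le_log hdetpos (hadamard_pd hMpd)
      _ = ∑ i, Real.log ((M i i).re) :=
          Real.log_prod (fun i _ => by rw [hMdiag i]; exact (hprodpos i).ne')
      _ = ∑ i, Real.log (1 + lam i * pf i) := by
          exact Finset.sum_congr rfl fun i _ => by rw [hMdiag i]
      _ ≤ ∑ i, Real.log (1 + lam i * max (μ - 1 / lam i) 0) := by
          refine sum_wf lam pf μ P hlam hp hμ ?_ ?_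
          · exact hwater
          · rw [htrS]; exact hRtr
  · set α : Fin n → ℝ := hA.eigenvalues with hαdef
    set V : Matrix.unitaryGroup (Fin n) ℂ := hA.eigenvectorUnitary with hVdef
    have hVV : (V : Matrix (Fin n) (Fin n) ℂ)ᴴ * (V : Matrix (Fin n) (Fin n) ℂ) = 1 := by
      simpa [Matrix.star_eq_conjTranspose] using Unitary.coe_star_mul_self V
    have hVV' : (V : Matrix (Fin n) (Fin n) ℂ) * (V : Matrix (Fin n) (Fin n) ℂ)ᴴ = 1 := by
      simpa [Matrix.star_eq_conjTranspose] using Unitary.coe_mul_star_self V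
    have hcV : ∀ X : Matrix (Fin n) (Fin n) ℂ,
        (V : Matrix (Fin n) (Fin n) ℂ)ᴴ * ((V : Matrix (Fin n) (Fin n) ℂ) * X) = X := by
      intro X; rw [← Matrix.mul_assoc, hVV, Matrix.one_mul]
    have hspecA : (μ : ℂ) • (1 : Matrix (Fin n) (Fin n) ℂ) - W⁻¹
        = (V : Matrix (Fin n) (Fin n) ℂ) * Matrix.diagonal (fun i => ((α i : ℝ) : ℂ)) *
          (V : Matrix (Fin n) (Fin n) ℂ)ᴴ := by
      have h := hA.spectral_theorem
      rw [Unitary.conjStarAlgAut_apply, Matrix.star_eq_conjTranspose] at h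
      exact h
    have hWinv : W⁻¹ = (V : Matrix (Fin n) (Fin n) ℂ) *
        Matrix.diagonal (fun i => ((μ - α i : ℝ) : ℂ)) * (V : Matrix (Fin n) (Fin n) ℂ)ᴴ := by
      have h1 : W⁻¹ = (μ : ℂ) • (1 : Matrix (Fin n) (Fin n) ℂ)
          - ((μ : ℂ) • (1 : Matrix (Fin n) (Fin n) ℂ) - W⁻¹) := by
        rw [sub_sub_cancel]
      rw [h1, hspecA]
      have h2 : (μ : ℂ) • (1 : Matrix (Fin n) (Fin n) ℂ)
          = (V : Matrix (Fin n) (Fin n) ℂ) * Matrix.diagonal (fun _ : Fin n => (μ : ℂ)) *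
            (V : Matrix (Fin n) (Fin n) ℂ)ᴴ := by
        have hcomm : (V : Matrix (Fin n) (Fin n) ℂ) * Matrix.diagonal (fun _ : Fin n => (μ : ℂ))
            = Matrix.diagonal (fun _ : Fin n => (μ : ℂ)) * (V : Matrix (Fin n) (Fin n) ℂ) := by
          ext i j; simp [Matrix.mul_diagonal, Matrix.diagonal_mul, mul_comm]
        rw [hcomm, Matrix.mul_assoc, hVV', Matrix.mul_one, Matrix.smul_one_eq_diagonal]
      rw [h2, ← Matrix.sub_mul, ← Matrix.mul_sub, Matrix.diagonal_sub]
      congr 1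
      congr 1
      congr 1
      funext i
      push_cast
      ring
    have hWinvU : W⁻¹ = (U : Matrix (Fin n) (Fin n) ℂ) *
        Matrix.diagonal (fun i => (((lam i)⁻¹ : ℝ) : ℂ)) * (U : Matrix (Fin n) (Fin n) ℂ)ᴴ := by
      apply Matrix.inv_eq_right_inv
      rw [hWspec]
      simp only [Matrix.mul_assoc]
      rw [hcU]
      have hDD' : D * Matrix.diagonal (fun i => (((lam i)⁻¹ : ℝ) : ℂ)) = 1 := by
        rw [hDdef, Matrix.diagonal_mul_diagonal]
        have hfe : (fun i => ((lam i : ℝ) : ℂ) * (((lam i)⁻¹ : ℝ) : ℂ)) = fun _ => (1 : ℂ) := by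
          funext i
          rw [← Complex.ofReal_mul, mul_inv_cancel₀ (hlam i).ne', Complex.ofReal_one]
        rw [hfe, Matrix.diagonal_one]
      rw [← Matrix.mul_assoc D, hDD', Matrix.one_mul, hUU']
    have hmulset : (Finset.univ.val.map (fun i => ((μ - α i : ℝ) : ℂ)))
        = (Finset.univ.val.map (fun i => (((lam i)⁻¹ : ℝ) : ℂ))) :=
      diag_multiset_eq V U _ _ (hWinv.symm.trans hWinvU)
    have hpos : ∀ j, 0 < μ - α j := by
      intro j
      have hmem : ((μ - α j : ℝ) : ℂ) ∈ Finset.univ.val.map (fun i => ((μ - α i : ℝ) : ℂ)) :=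
        Multiset.mem_map_of_mem _ (Finset.mem_univ j)
      rw [hmulset] at hmem
      obtain ⟨i, _, hi⟩ := Multiset.mem_map.mp hmem
      have h5 : (lam i)⁻¹ = μ - α j := by exact_mod_cast hi
      rw [← h5]
      exact inv_pos.mpr (hlam i)
    set Dν : Matrix (Fin n) (Fin n) ℂ :=
      Matrix.diagonal (fun i => (((μ - α i)⁻¹ : ℝ) : ℂ)) with hDν
    have hWV : W = (V : Matrix (Fin n) (Fin n) ℂ) * Dν * (V : Matrix (Fin n) (Fin n) ℂ)ᴴ := by
      have h1 : W⁻¹ * ((V : Matrix (Fin n) (Fin n) ℂ) * Dν *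
          (V : Matrix (Fin n) (Fin n) ℂ)ᴴ) = 1 := by
        rw [hWinv]
        simp only [Matrix.mul_assoc]
        rw [hcV]
        have hββ : Matrix.diagonal (fun i => ((μ - α i : ℝ) : ℂ)) * Dν = 1 := by
          rw [hDν, Matrix.diagonal_mul_diagonal]
          have hfe : (fun i => ((μ - α i : ℝ) : ℂ) * (((μ - α i)⁻¹ : ℝ) : ℂ))
              = fun _ => (1 : ℂ) := by
            funext i
            rw [← Complex.ofReal_mul, mul_inv_cancel₀ (hpos i).ne', Complex.ofReal_one]
          rw [hfe, Matrix.diagonal_one]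
        rw [← Matrix.mul_assoc (Matrix.diagonal _) Dν, hββ, Matrix.one_mul, hVV']
      have h2 := Matrix.inv_eq_right_inv h1
      rw [← h2, Matrix.nonsing_inv_nonsing_inv W ((Matrix.isUnit_iff_isUnit_det W).mp hW.isUnit)]
    have hppeq : matPosPart ((μ : ℂ) • (1 : Matrix (Fin n) (Fin n) ℂ) - W⁻¹) hA
        = (V : Matrix (Fin n) (Fin n) ℂ) *
          Matrix.diagonal (fun i => ((max (α i) 0 : ℝ) : ℂ)) *
          (V : Matrix (Fin n) (Fin n) ℂ)ᴴ := rfl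
    set g : Fin n → ℝ := fun i => 1 + (μ - α i)⁻¹ * max (α i) 0 with hg
    have h3 : 1 + W * matPosPart ((μ : ℂ) • (1 : Matrix (Fin n) (Fin n) ℂ) - W⁻¹) hA
        = (V : Matrix (Fin n) (Fin n) ℂ) * Matrix.diagonal (fun i => ((g i : ℝ) : ℂ)) *
          (V : Matrix (Fin n) (Fin n) ℂ)ᴴ := by
      rw [hppeq, hWV]
      have h4 : (V : Matrix (Fin n) (Fin n) ℂ) * Dν * (V : Matrix (Fin n) (Fin n) ℂ)ᴴ *
          ((V : Matrix (Fin n) (Fin n) ℂ) * Matrix.diagonal (fun i => ((max (α i) 0 : ℝ) : ℂ)) *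
            (V : Matrix (Fin n) (Fin n) ℂ)ᴴ)
          = (V : Matrix (Fin n) (Fin n) ℂ) *
            (Dν * Matrix.diagonal (fun i => ((max (α i) 0 : ℝ) : ℂ))) *
            (V : Matrix (Fin n) (Fin n) ℂ)ᴴ := by
        simp only [Matrix.mul_assoc]
        rw [hcV]
      rw [h4, hDν, Matrix.diagonal_mul_diagonal]
      have h5 : Matrix.diagonal (fun i => ((g i : ℝ) : ℂ))
          = 1 + Matrix.diagonal (fun i => (((μ - α i)⁻¹ : ℝ) : ℂ) * ((max (α i) 0 : ℝ) : ℂ)) := by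
        rw [← Matrix.diagonal_one, Matrix.diagonal_add]
        congr 1
        funext i
        rw [hg]
        push_cast
        ring
      rw [h5, Matrix.mul_add, Matrix.add_mul, Matrix.mul_one, hVV']
    have hdetg : (1 + W * matPosPart ((μ : ℂ) • (1 : Matrix (Fin n) (Fin n) ℂ) - W⁻¹) hA).det.re
        = ∏ i, g i := by
      rw [h3, det_conj_unitary V, Matrix.det_diagonal, ← Complex.ofReal_prod, Complex.ofReal_re]
    set f : ℂ → ℝ := fun z => max (μ / z.re) 1 with hf
    have hgf : ∀ i, g i = f ((μ - α i : ℝ) : ℂ) := by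
      intro i
      rw [hg, hf]
      simp only [Complex.ofReal_re]
      rcases le_or_gt (α i) 0 with h | h
      · rw [max_eq_right h, mul_zero, add_zero, eq_comm, max_eq_right]
        rw [div_le_one (hpos i)]
        linarith
      · rw [max_eq_left h.le, eq_comm, max_eq_left]
        · rw [div_eq_iff (hpos i).ne']
          have hne : μ - α i ≠ 0 := (hpos i).ne'
          field_simp
          ring
        · rw [le_div_iff₀ (hpos i)]
          linarith
    have hlf : ∀ i, 1 + lam i * max (μ - 1/lam i) 0 = f (((lam i)⁻¹ : ℝ) : ℂ) := by
      intro i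
      have hre : f (((lam i)⁻¹ : ℝ) : ℂ) = max (μ * lam i) 1 := by
        rw [hf]
        simp only [Complex.ofReal_re]
        congr 1
        rw [div_eq_mul_inv, inv_inv]
      rw [hre]
      rcases le_or_gt (μ - 1/lam i) 0 with h | h
      · rw [max_eq_right h, mul_zero, add_zero, eq_comm, max_eq_right]
        have := (le_div_iff₀ (hlam i)).mp (by linarith : μ ≤ 1/lam i)
        linarith
      · rw [max_eq_left h.le, eq_comm, max_eq_left]
        · rw [mul_sub, mul_one_div, div_self (hlam i).ne']
          ring
        · have := (div_lt_iff₀ (hlam i)).mp (by linarith : 1/lam i < μ)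
          linarith
    have hprodf : ∏ i, f ((μ - α i : ℝ) : ℂ) = ∏ i, f (((lam i)⁻¹ : ℝ) : ℂ) := by
      have h4 : ∀ (e : Fin n → ℂ), ∏ i, f (e i) = ((Finset.univ.val.map e).map f).prod := by
        intro e
        rw [Multiset.map_map]
        rfl
      rw [h4, h4, hmulset]
    have hfinal : (1 + W * matPosPart ((μ : ℂ) • (1 : Matrix (Fin n) (Fin n) ℂ) - W⁻¹) hA).det.re
        = ∏ i, (1 + lam i * max (μ - 1/lam i) 0) := by
      rw [hdetg]
      rw [Finset.prod_congr rfl fun i _ => hgf i, hprodf]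
      exact (Finset.prod_congr rfl fun i _ => (hlf i)).symm
    rw [hfinal]
    refine Real.log_prod fun i _ => ?_
    have h6 : 0 < 1 + lam i * max (μ - 1/lam i) 0 := by
      have := mul_nonneg (hlam i).le (le_max_right (μ - 1/lam i) 0)
      linarith
    exact h6.ne'
end

section
/- Concavity of the objective: the map R ↦ log det(I + W R) is concave on the convex cone of Hermitian positive semi-definite n×n matrices, for any fixed Hermitian positive semi-definite W. -/
open Matrix ComplexOrder

open Finset in
/-- det of a convex combination of a PSD matrix with the identity, via eigenvalues. -/
lemma det_conv_one {n : ℕ} {C : Matrix (Fin n) (Fin n) ℂ} (hC : C.PosSemidef) (t : ℝ) :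
    ((t : ℂ) • C + ((1 - t : ℝ) : ℂ) • 1).det
      = ((∏ i, (t * hC.1.eigenvalues i + (1 - t)) : ℝ) : ℂ) := by
  have hCh := hC.1
  set U : Matrix (Fin n) (Fin n) ℂ := (hCh.eigenvectorUnitary : Matrix (Fin n) (Fin n) ℂ) with hUdef
  have hU : U * star U = 1 := (Matrix.mem_unitaryGroup_iff).mp hCh.eigenvectorUnitary.2
  have hdiag : (t : ℂ) • (diagonal (RCLike.ofReal ∘ hCh.eigenvalues) : Matrix (Fin n) (Fin n) ℂ)
      + ((1 - t : ℝ) : ℂ) • 1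
      = diagonal (fun i => ((t * hC.1.eigenvalues i + (1 - t) : ℝ) : ℂ)) := by
    rw [← diagonal_one, ← diagonal_smul, ← diagonal_smul, diagonal_add]
    funext i
    simp only [Pi.add_apply, Pi.smul_apply, Function.comp_apply, smul_eq_mul, Pi.one_apply,
      mul_one]
    push_cast
    ring_nf
    rfl
  have hsplit : (t : ℂ) • C + ((1 - t : ℝ) : ℂ) • 1
      = U * ((t : ℂ) • (diagonal (RCLike.ofReal ∘ hCh.eigenvalues)) + ((1 - t : ℝ) : ℂ) • 1)
        * star U := by
    conv_lhs => rw [hCh.spectral_theorem]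
    simp [Matrix.mul_add, Matrix.add_mul, Matrix.mul_smul, Matrix.smul_mul, hU]
    rfl
  rw [hsplit, det_mul_right_comm, hU, one_mul, hdiag, det_diagonal]
  norm_cast

/-- Key inequality: log-det concavity for positive definite matrices, multiplicative form. -/
lemma det_conv_ge {n : ℕ} {A B : Matrix (Fin n) (Fin n) ℂ} (hA : A.PosDef) (hB : B.PosDef)
    {t : ℝ} (ht0 : 0 ≤ t) (ht1 : t ≤ 1) :
    A.det.re ^ t * B.det.re ^ (1 - t) ≤ ((t : ℂ) • A + ((1 - t : ℝ) : ℂ) • B).det.re := by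
  have hBpos := hB.det_pos
  have hApos := hA.det_pos
  rw [Complex.lt_def] at hBpos hApos
  obtain ⟨a, hadet⟩ : ∃ x : ℝ, A.det = (x : ℂ) := ⟨A.det.re, by apply Complex.ext <;> simp [← hApos.2]⟩
  obtain ⟨b, hbdet⟩ : ∃ x : ℝ, B.det = (x : ℂ) := ⟨B.det.re, by apply Complex.ext <;> simp [← hBpos.2]⟩
  have hare : A.det.re = a := by rw [hadet]; simp
  have hbre : B.det.re = b := by rw [hbdet]; simp
  rw [hare] at hApos
  rw [hbre] at hBpos
  have ha : (0:ℝ) < a := by simpa using hApos.1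
  have hb : (0:ℝ) < b := by simpa using hBpos.1
  set Q := (open scoped MatrixOrder in CFC.sqrt B) with hQdef
  have hQ : Q.PosSemidef := by open scoped MatrixOrder in exact (CFC.sqrt_nonneg B).posSemidef
  have hQQ : Q * Q = B := by open scoped MatrixOrder in exact CFC.sqrt_mul_sqrt_self B hB.posSemidef.nonneg
  have hdetQ : Q.det * Q.det = (b : ℂ) := by rw [← det_mul, hQQ, hbdet]
  have hQdet_ne : Q.det ≠ 0 := by
    intro h
    rw [h, mul_zero] at hdetQ
    exact (Complex.ofReal_ne_zero.mpr hb.ne') hdetQ.symm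
  haveI : Invertible Q := Q.invertibleOfIsUnitDet hQdet_ne.isUnit
  set C := Q⁻¹ * A * Q⁻¹ with hCdef
  have hQinvH : Q⁻¹ᴴ = Q⁻¹ := hQ.1.inv
  have hC : C.PosSemidef := by
    simpa [hQinvH] using hA.posSemidef.mul_mul_conjTranspose_same Q⁻¹
  have hQCQ : Q * C * Q = A := by
    rw [hCdef]
    simp only [Matrix.mul_assoc]
    rw [Matrix.mul_inv_cancel_left_of_invertible, Matrix.inv_mul_of_invertible, Matrix.mul_one]
  have hcomb : (t : ℂ) • A + ((1 - t : ℝ) : ℂ) • B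
      = Q * ((t : ℂ) • C + ((1 - t : ℝ) : ℂ) • 1) * Q := by
    simp [Matrix.mul_add, Matrix.add_mul, Matrix.mul_smul, Matrix.smul_mul, hQCQ, hQQ]
  set μ := hC.1.eigenvalues with hμdef
  have hμnonneg : ∀ i, 0 ≤ μ i := fun i => hC.eigenvalues_nonneg i
  set P : ℝ := ∏ i, (t * μ i + (1 - t)) with hPdef
  have hdetM : ((t : ℂ) • A + ((1 - t : ℝ) : ℂ) • B).det = ((b * P : ℝ) : ℂ) := by
    rw [hcomb, det_mul, det_mul, det_conv_one hC t, ← hμdef, ← hPdef]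
    push_cast
    linear_combination (P : ℂ) * hdetQ
  have hre : ((t : ℂ) • A + ((1 - t : ℝ) : ℂ) • B).det.re = b * P := by
    rw [hdetM, Complex.ofReal_re]
  have hCA : C.det * B.det = A.det := by
    rw [hCdef, det_mul, det_mul, hbdet, ← hdetQ]
    have h1 : Q⁻¹.det * Q.det = 1 := Q.det_nonsing_inv_mul_det hQdet_ne.isUnit
    linear_combination A.det * (Q⁻¹.det * Q.det + 1) * h1
  have hprodμ : (∏ i, μ i) = a / b := by
    have h2 : C.det = ((∏ i, μ i : ℝ) : ℂ) := by
      rw [hC.1.det_eq_prod_eigenvalues]; norm_cast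
    rw [h2, hbdet, hadet] at hCA
    have h3 : (∏ i, μ i) * b = a := by exact_mod_cast hCA
    field_simp
    linarith [h3]
  have hAMGM : (∏ i, μ i) ^ t ≤ P := by
    rw [← Real.finset_prod_rpow _ _ (fun i _ => hμnonneg i) t]
    apply Finset.prod_le_prod
    · intro i _; exact Real.rpow_nonneg (hμnonneg i) t
    · intro i _
      have := Real.geom_mean_le_arith_mean2_weighted ht0 (by linarith : (0:ℝ) ≤ 1 - t)
        (hμnonneg i) zero_le_one (by ring)
      simpa using this
  rw [hre, hare, hbre]
  have hbt : (0:ℝ) < b ^ t := Real.rpow_pos_of_pos hb t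
  have heq : a ^ t * b ^ (1 - t) = b * (a / b) ^ t := by
    rw [Real.div_rpow ha.le hb.le, Real.rpow_sub hb, Real.rpow_one]
    field_simp
  rw [heq, ← hprodμ]
  exact mul_le_mul_of_nonneg_left hAMGM hb.le

/-- Concavity: R ↦ log det(I + W R) is concave on the convex cone of Hermitian PSD
matrices, for fixed Hermitian PSD W. -/
theorem logdet_concave {n : ℕ} (W : Matrix (Fin n) (Fin n) ℂ) (hW : W.PosSemidef) :
    ∀ (R₁ R₂ : Matrix (Fin n) (Fin n) ℂ), R₁.PosSemidef → R₂.PosSemidef →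
      ∀ t : ℝ, 0 ≤ t → t ≤ 1 →
        t * Real.log ((1 + W * R₁).det.re) + (1 - t) * Real.log ((1 + W * R₂).det.re) ≤
          Real.log ((1 + W * ((t : ℂ) • R₁ + ((1 - t : ℝ) : ℂ) • R₂)).det.re) := by
  intro R₁ R₂ hR₁ hR₂ t ht0 ht1
  set S := (open scoped MatrixOrder in CFC.sqrt W) with hSdef
  have hS : S.PosSemidef := by open scoped MatrixOrder in exact (CFC.sqrt_nonneg W).posSemidef
  have hSS : S * S = W := by open scoped MatrixOrder in exact CFC.sqrt_mul_sqrt_self W hW.nonneg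
  have hSH : Sᴴ = S := hS.1
  have key_eq : ∀ R : Matrix (Fin n) (Fin n) ℂ, (1 + W * R).det = (1 + S * R * S).det := by
    intro R
    rw [← hSS, Matrix.mul_assoc, det_one_add_mul_comm, Matrix.mul_assoc]
  have hA1 : (1 + S * R₁ * S).PosDef :=
    Matrix.PosDef.one.add_posSemidef (by simpa [hSH] using hR₁.mul_mul_conjTranspose_same S)
  have hA2 : (1 + S * R₂ * S).PosDef :=
    Matrix.PosDef.one.add_posSemidef (by simpa [hSH] using hR₂.mul_mul_conjTranspose_same S)
  have hc : (t : ℂ) + ((1 - t : ℝ) : ℂ) = 1 := by push_cast; ring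
  have hconv : 1 + S * ((t : ℂ) • R₁ + ((1 - t : ℝ) : ℂ) • R₂) * S
      = (t : ℂ) • (1 + S * R₁ * S) + ((1 - t : ℝ) : ℂ) • (1 + S * R₂ * S) := by
    have h1 : (t : ℂ) • (1 : Matrix (Fin n) (Fin n) ℂ) + ((1 - t : ℝ) : ℂ) • 1 = 1 := by
      rw [← add_smul, hc, one_smul]
    calc 1 + S * ((t : ℂ) • R₁ + ((1 - t : ℝ) : ℂ) • R₂) * S
        = ((t : ℂ) • (1 : Matrix (Fin n) (Fin n) ℂ) + ((1 - t : ℝ) : ℂ) • 1)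
          + ((t : ℂ) • (S * R₁ * S) + ((1 - t : ℝ) : ℂ) • (S * R₂ * S)) := by
          rw [h1, Matrix.mul_add, Matrix.add_mul, Matrix.mul_smul, Matrix.smul_mul,
            Matrix.mul_smul, Matrix.smul_mul]
      _ = (t : ℂ) • (1 + S * R₁ * S) + ((1 - t : ℝ) : ℂ) • (1 + S * R₂ * S) := by
          rw [smul_add, smul_add]; abel
  have hre1 : (0:ℝ) < (1 + S * R₁ * S).det.re := by
    have := hA1.det_pos; rw [Complex.lt_def] at this; simpa using this.1
  have hre2 : (0:ℝ) < (1 + S * R₂ * S).det.re := by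
    have := hA2.det_pos; rw [Complex.lt_def] at this; simpa using this.1
  have hkey := det_conv_ge hA1 hA2 ht0 ht1
  rw [key_eq R₁, key_eq R₂, key_eq, hconv]
  calc t * Real.log ((1 + S * R₁ * S).det.re) + (1 - t) * Real.log ((1 + S * R₂ * S).det.re)
      = Real.log ((1 + S * R₁ * S).det.re ^ t * (1 + S * R₂ * S).det.re ^ (1 - t)) := by
        rw [Real.log_mul (Real.rpow_pos_of_pos hre1 t).ne' (Real.rpow_pos_of_pos hre2 (1-t)).ne',
          Real.log_rpow hre1, Real.log_rpow hre2]
    _ ≤ Real.log (((t : ℂ) • (1 + S * R₁ * S) + ((1 - t : ℝ) : ℂ) • (1 + S * R₂ * S)).det.re) := by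
        apply Real.log_le_log (by positivity) hkey
end

section
/- MISO rank-one optimality (per-antenna constraints, single frequency): Let h ∈ ℂ^n be nonzero and σ² > 0. The maximum of log(1 + σ^{-2} h† R h) over Hermitian PSD matrices R with diagonal entries R_{ii} ≤ P_i equals log(1 + σ^{-2} (∑_i |h_i| √P_i)²), attained by the rank-one matrix R* = w w† with w_i = √P_i e^{j arg(h_i)} (conjugate-phase beamforming with full per-antenna power). -/
open Matrix ComplexOrder

-- quadratic form real-part nonneg, diag facts
lemma psd_re_nonneg {n : ℕ} {R : Matrix (Fin n) (Fin n) ℂ} (hR : R.PosSemidef)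
    (x : Fin n → ℂ) : 0 ≤ (star x ⬝ᵥ R *ᵥ x).re := by
  have := hR.dotProduct_mulVec_nonneg x
  simpa [Complex.le_def] using (Complex.le_def.mp this).1

lemma psd_diag_eq {n : ℕ} {R : Matrix (Fin n) (Fin n) ℂ} (hR : R.PosSemidef)
    (k : Fin n) : R k k = ((R k k).re : ℂ) ∧ 0 ≤ (R k k).re := by
  have him : (R k k).im = 0 := by
    have := congr_fun (congr_fun hR.1 k) k
    rw [conjTranspose_apply] at this
    simpa [Complex.ext_iff, neg_eq_iff_add_eq_zero] using
      (Complex.conj_eq_iff_im.mp this)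
  constructor
  · exact Complex.ext rfl (by simp [him])
  · have h0 := psd_re_nonneg hR (Pi.single k 1)
    have hs : star (Pi.single k 1 : Fin n → ℂ) = Pi.single k 1 := by
      funext l; by_cases hl : l = k <;> simp [Pi.single_apply, hl]
    rw [hs] at h0
    simpa [mulVec_single, single_dotProduct] using h0

lemma psd_entry_sq_le {n : ℕ} {R : Matrix (Fin n) (Fin n) ℂ} (hR : R.PosSemidef)
    (i j : Fin n) : ‖R i j‖ ^ 2 ≤ (R i i).re * (R j j).re := by
  obtain ⟨hii, hii0⟩ := psd_diag_eq hR i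
  obtain ⟨hjj, hjj0⟩ := psd_diag_eq hR j
  by_cases hij : i = j
  · subst hij
    have : ‖R i i‖ = (R i i).re := by
      rw [hii]; simpa using Complex.norm_of_nonneg hii0
    rw [this, sq]
  by_cases hc : R i j = 0
  · simpa [hc] using mul_nonneg hii0 hjj0
  have hji : R j i = starRingEnd ℂ (R i j) := by
    have := congr_fun (congr_fun hR.1 j) i
    rw [conjTranspose_apply] at this
    rw [← this]; rfl
  set a := (R i i).re
  set d := (R j j).re
  set m := ‖R i j‖ with hmdef
  have hm0 : 0 < m := norm_pos_iff.mpr hc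
  have hcc : starRingEnd ℂ (R i j) * (R i j) = ((m * m : ℝ) : ℂ) := by
    rw [mul_comm, Complex.mul_conj, hmdef, ← Complex.sq_norm, sq]
  have key : ∀ t : ℝ, 0 ≤ (a * (m * m)) * (t * t) + (2 * (m * m)) * t + d := by
    intro t
    set cc : ℂ := (t : ℂ) * (R i j)
    have h0 := psd_re_nonneg hR (Pi.single i cc + Pi.single j 1)
    have hs : star (Pi.single i cc + Pi.single j 1 : Fin n → ℂ)
        = Pi.single i (star cc) + Pi.single j (1 : ℂ) := by
      funext l
      simp only [Pi.star_apply, Pi.add_apply, Pi.single_apply]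
      split_ifs with h1 h2
      · exact absurd (h1.symm.trans h2) hij
      · simp
      · simp
      · simp
    rw [hs] at h0
    have hexp : (Pi.single i (star cc) + Pi.single j (1 : ℂ)) ⬝ᵥ
        R *ᵥ (Pi.single i cc + Pi.single j 1)
        = star cc * (R i i * cc + R i j)
          + (R j i * cc + R j j) := by
      simp [mulVec_add, mulVec_single, add_dotProduct, single_dotProduct, Pi.add_apply]
      ring
    rw [hexp] at h0
    have hval : star cc * (R i i * cc + R i j) + (R j i * cc + R j j)
        = (((a * (m * m)) * (t * t) + (2 * (m * m)) * t + d : ℝ) : ℂ) := by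
      rw [hji, hii, hjj]
      simp only [cc, Complex.star_def, _root_.map_mul, Complex.conj_ofReal]
      push_cast
      push_cast at hcc
      linear_combination ((a : ℂ) * (t : ℂ) ^ 2 + 2 * (t : ℂ)) * hcc
    rw [hval] at h0
    simpa using h0
  have hd := discrim_le_zero key
  rw [discrim] at hd
  nlinarith [hm0, mul_pos hm0 hm0]

/-- MISO rank-one optimality under per-antenna power constraints (single frequency):
the maximum of log(1 + σ⁻² hᴴ R h) over Hermitian PSD R with R_{ii} ≤ P_i equals
log(1 + σ⁻² (∑ |h_i| √P_i)²), attained by the rank-one conjugate-phase beamforming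
matrix R* = w wᴴ with w_i = √P_i e^{j arg h_i}. -/
theorem miso_rank_one_optimal {n : ℕ} (h : Fin n → ℂ) (σsq : ℝ) (P : Fin n → ℝ)
    (hh : h ≠ 0) (hσ : 0 < σsq) (hP : ∀ i, 0 < P i) :
    let w : Fin n → ℂ := fun i => (Real.sqrt (P i) : ℂ) * Complex.exp ((h i).arg * Complex.I)
    let Rstar : Matrix (Fin n) (Fin n) ℂ := Matrix.vecMulVec w (star w)
    Rstar.PosSemidef ∧ (∀ i, (Rstar i i).re ≤ P i) ∧
    (∀ R : Matrix (Fin n) (Fin n) ℂ, R.PosSemidef → (∀ i, (R i i).re ≤ P i) →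
      Real.log (1 + σsq⁻¹ * (star h ⬝ᵥ R *ᵥ h).re) ≤
        Real.log (1 + σsq⁻¹ * (∑ i, ‖h i‖ * Real.sqrt (P i)) ^ 2)) ∧
    Real.log (1 + σsq⁻¹ * (star h ⬝ᵥ Rstar *ᵥ h).re) =
      Real.log (1 + σsq⁻¹ * (∑ i, ‖h i‖ * Real.sqrt (P i)) ^ 2) := by
  intro w Rstar
  -- quadratic form of Rstar factors
  have hquad : ∀ x : Fin n → ℂ, star x ⬝ᵥ Rstar *ᵥ x = (star x ⬝ᵥ w) * (star w ⬝ᵥ x) := by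
    intro x
    simp only [Rstar, dotProduct, mulVec, vecMulVec_apply, Pi.star_apply]
    rw [Finset.sum_mul_sum]
    rw [Finset.sum_congr rfl (fun i _ => Finset.mul_sum _ _ _)]
    refine Finset.sum_congr rfl fun i _ => Finset.sum_congr rfl fun j _ => by ring
  have hstar_dot : ∀ x : Fin n → ℂ, star x ⬝ᵥ w = star (star w ⬝ᵥ x) := by
    intro x
    simp only [dotProduct, star_sum, Pi.star_apply, star_mul', star_star]
    exact Finset.sum_congr rfl fun k _ => mul_comm _ _
  have hPSD : Rstar.PosSemidef := by
    refine Matrix.PosSemidef.of_dotProduct_mulVec_nonneg ?_ ?_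
    · ext k l
      simp [Rstar, vecMulVec_apply, conjTranspose_apply, mul_comm]
    · intro x
      rw [hquad x, hstar_dot x]
      exact star_mul_self_nonneg _
  have hdiag : ∀ i, (Rstar i i).re = P i := by
    intro i
    have : Rstar i i = w i * starRingEnd ℂ (w i) := by
      simp [Rstar, vecMulVec_apply]
    rw [this, Complex.mul_conj]
    have : Complex.normSq (w i) = P i := by
      rw [← Complex.sq_norm]
      simp only [w, norm_mul, Complex.norm_real, Real.norm_eq_abs, Complex.norm_exp_ofReal_mul_I,
        mul_one, abs_of_nonneg (Real.sqrt_nonneg _)]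
      exact Real.sq_sqrt (hP i).le
    simp [this]
  -- the value of the beamformer
  have hconj : ∀ i, starRingEnd ℂ (h i) * Complex.exp (((h i).arg : ℂ) * Complex.I)
      = (‖h i‖ : ℂ) := by
    intro i
    by_cases h0 : h i = 0
    · simp [h0]
    · have habsne : (‖h i‖ : ℂ) ≠ 0 := by
        exact_mod_cast (norm_ne_zero_iff.mpr h0)
      apply mul_left_cancel₀ habsne
      rw [← mul_assoc, mul_comm ((‖h i‖ : ℂ)), mul_assoc,
        Complex.norm_mul_exp_arg_mul_I, mul_comm ((starRingEnd ℂ) (h i)),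
        Complex.mul_conj, ← Complex.sq_norm]
      push_cast; ring
  have hhw : star h ⬝ᵥ w = ((∑ i, ‖h i‖ * Real.sqrt (P i) : ℝ) : ℂ) := by
    push_cast
    simp only [dotProduct, Pi.star_apply]
    refine Finset.sum_congr rfl fun i _ => ?_
    simp only [w]
    calc star (h i) * ((Real.sqrt (P i) : ℂ) * Complex.exp (((h i).arg : ℂ) * Complex.I))
        = (Real.sqrt (P i) : ℂ) * ((starRingEnd ℂ) (h i) * Complex.exp (((h i).arg : ℂ) * Complex.I)) := by
          simp only [Complex.star_def]; ring
      _ = (Real.sqrt (P i) : ℂ) * (‖h i‖ : ℂ) := by rw [hconj i]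
      _ = (‖h i‖ : ℂ) * (Real.sqrt (P i) : ℂ) := by ring
  have hwh : star w ⬝ᵥ h = ((∑ i, ‖h i‖ * Real.sqrt (P i) : ℝ) : ℂ) := by
    have := congrArg star (hstar_dot h)
    rw [star_star, hhw] at this
    rw [← this, Complex.star_def, Complex.conj_ofReal]
  set S := ∑ i, ‖h i‖ * Real.sqrt (P i) with hS
  have hSval : (star h ⬝ᵥ Rstar *ᵥ h).re = S ^ 2 := by
    rw [hquad h, hhw, hwh]
    push_cast
    rw [← Complex.ofReal_mul]
    rw [Complex.ofReal_re]
    ring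
  refine ⟨hPSD, fun i => (hdiag i).le, ?_, ?_⟩
  · intro R hRpsd hRd
    have hre0 : 0 ≤ (star h ⬝ᵥ R *ᵥ h).re := psd_re_nonneg hRpsd h
    have hmain : (star h ⬝ᵥ R *ᵥ h).re ≤ S ^ 2 := by
      have hre : (star h ⬝ᵥ R *ᵥ h).re
          = ∑ i, ∑ j, (starRingEnd ℂ (h i) * (R i j * h j)).re := by
        simp only [dotProduct, mulVec, Pi.star_apply, Complex.re_sum, Finset.mul_sum]
        rfl
      rw [hre, hS, sq, Finset.sum_mul_sum]
      refine Finset.sum_le_sum fun i _ => Finset.sum_le_sum fun j _ => ?_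
      have hRij : ‖R i j‖ ≤ Real.sqrt (P i) * Real.sqrt (P j) := by
        have h1 := psd_entry_sq_le hRpsd i j
        have h2 : ‖R i j‖ ^ 2 ≤ P i * P j := by
          refine h1.trans (mul_le_mul (hRd i) (hRd j) (psd_diag_eq hRpsd j).2 (hP i).le)
        rw [← Real.sqrt_mul (hP i).le]
        exact (Real.le_sqrt (norm_nonneg _) (mul_nonneg (hP i).le (hP j).le)).mpr h2
      calc (starRingEnd ℂ (h i) * (R i j * h j)).re
          ≤ ‖starRingEnd ℂ (h i) * (R i j * h j)‖ := Complex.re_le_norm _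
        _ = ‖h i‖ * (‖R i j‖ * ‖h j‖) := by
            simp [norm_mul, Complex.norm_conj]
        _ ≤ ‖h i‖ * ((Real.sqrt (P i) * Real.sqrt (P j)) * ‖h j‖) := by
            have hnn : (0:ℝ) ≤ ‖h i‖ := norm_nonneg _
            have hnn2 : (0:ℝ) ≤ ‖h j‖ := norm_nonneg _
            exact mul_le_mul_of_nonneg_left
              (mul_le_mul_of_nonneg_right hRij hnn2) hnn
        _ = ‖h i‖ * Real.sqrt (P i) * (‖h j‖ * Real.sqrt (P j)) := by
            ring
    have hpos : 0 < 1 + σsq⁻¹ * (star h ⬝ᵥ R *ᵥ h).re := by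
      have := mul_nonneg (inv_nonneg.mpr hσ.le) hre0
      linarith
    apply Real.log_le_log hpos
    have : σsq⁻¹ * (star h ⬝ᵥ R *ᵥ h).re ≤ σsq⁻¹ * S ^ 2 :=
      mul_le_mul_of_nonneg_left hmain (inv_nonneg.mpr hσ.le)
    linarith
  · rw [hSval]
end
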